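/- arXiv:2407.06034 — 4 statements merged into one kernel-verified Lean document; each statement's English description precedes it below -/
import Mathlib

section
/- Let η₁ and η₂ be two compactly supported finite Borel measures on ℝ. If for every t ∈ ℝ one has ∫ |x − t| dη₁(x) = ∫ |x − t| dη₂(x), then η₁ = η₂. -/
open MeasureTheory Filter Set

lemma cont_integrable (η : Measure ℝ) [IsFiniteMeasure η] {K : Set ℝ}
    (hK : IsCompact K) (h0 : η Kᶜ = 0) {f : ℝ → ℝ} (hf : Continuous f) :
    Integrable f η := by
  have hmem : ∀ᵐ x ∂η, x ∈ K := by
    rw [ae_iff]; exact h0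
  have hr : η.restrict K = η := Measure.restrict_eq_self_of_ae_mem hmem
  have : IntegrableOn f K η := hf.continuousOn.integrableOn_compact hK
  rwa [IntegrableOn, hr] at this

lemma large_t (η : Measure ℝ) [IsFiniteMeasure η] {K : Set ℝ}
    (hK : IsCompact K) (h0 : η Kᶜ = 0) {R t : ℝ}
    (hKR : K ⊆ Metric.closedBall 0 R) (ht : R ≤ t) :
    ∫ x, |x - t| ∂η = t * (η Set.univ).toReal - ∫ x, x ∂η := by
  have hmem : ∀ᵐ x ∂η, x ∈ K := by rw [ae_iff]; exact h0
  have h1 : ∫ x, |x - t| ∂η = ∫ x, (t - x) ∂η := by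
    refine integral_congr_ae (hmem.mono fun x hx => ?_)
    show |x - t| = t - x
    have hx' := hKR hx
    rw [Metric.mem_closedBall, Real.dist_eq, sub_zero] at hx'
    have hxt : x ≤ t := le_trans (abs_le.1 hx').2 ht
    rw [abs_sub_comm, abs_of_nonneg (by linarith)]
  rw [h1, integral_sub (integrable_const t) (cont_integrable η hK h0 (f := fun x => x) continuous_id),
    integral_const, smul_eq_mul, mul_comm]; rfl

lemma decomp (η : Measure ℝ) [IsFiniteMeasure η] {K : Set ℝ}
    (hK : IsCompact K) (h0 : η Kᶜ = 0) (t : ℝ) :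
    ∫ x, |x - t| ∂η
      = (t * (η Set.univ).toReal - ∫ x, x ∂η) + 2 * ∫ x, max (x - t) 0 ∂η := by
  have hi1 : Integrable (fun x => t - x) η :=
    cont_integrable η hK h0 (continuous_const.sub continuous_id)
  have hi2 : Integrable (fun x => 2 * max (x - t) 0) η :=
    cont_integrable η hK h0
      (continuous_const.mul ((continuous_id.sub continuous_const).max continuous_const))
  have h1 : ∀ x : ℝ, |x - t| = (t - x) + 2 * max (x - t) 0 := by
    intro x
    rcases le_total x t with hx | hx
    · rw [abs_sub_comm, abs_of_nonneg (by linarith), max_eq_right (by linarith)]; ring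
    · rw [abs_of_nonneg (by linarith), max_eq_left (by linarith)]; ring
  calc ∫ x, |x - t| ∂η = ∫ x, ((t - x) + 2 * max (x - t) 0) ∂η := by
        exact integral_congr_ae (Eventually.of_forall fun x => h1 x)
    _ = (∫ x, (t - x) ∂η) + ∫ x, 2 * max (x - t) 0 ∂η := integral_add hi1 hi2
    _ = (t * (η Set.univ).toReal - ∫ x, x ∂η) + 2 * ∫ x, max (x - t) 0 ∂η := by
        rw [integral_sub (integrable_const t) (cont_integrable η hK h0 (f := fun x => x) continuous_id),
          integral_const, smul_eq_mul, mul_comm, integral_const_mul]; rfl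

lemma tendsto_quot (η : Measure ℝ) [IsFiniteMeasure η] (t : ℝ) :
    Tendsto (fun h : ℝ => ∫ x, (max (x - t + h) 0 - max (x - t) 0) / h ∂η)
      (nhdsWithin 0 (Set.Ioi 0)) (nhds ((η (Set.Ici t)).toReal)) := by
  have key := tendsto_integral_filter_of_dominated_convergence (μ := η)
    (l := nhdsWithin (0:ℝ) (Set.Ioi 0))
    (F := fun h x => (max (x - t + h) 0 - max (x - t) 0) / h)
    (f := (Set.Ici t).indicator fun _ => (1:ℝ)) (bound := fun _ => 1)
    (Eventually.of_forall fun h =>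
      ((((continuous_id.sub continuous_const).add continuous_const).max
        continuous_const).sub ((continuous_id.sub continuous_const).max
        continuous_const)).div_const h |>.aestronglyMeasurable)
    ?_ (integrable_const 1) ?_
  · have : ∫ x, (Set.Ici t).indicator (fun _ => (1:ℝ)) x ∂η = (η (Set.Ici t)).toReal := by
      rw [integral_indicator measurableSet_Ici, integral_const, smul_eq_mul, mul_one,
        Measure.real, Measure.restrict_apply_univ]
    rwa [this] at key
  · filter_upwards [self_mem_nhdsWithin] with h (hh : 0 < h)
    refine Eventually.of_forall fun x => ?_
    have h1 : max (x - t) 0 ≤ max (x - t + h) 0 := max_le_max (by linarith) le_rfl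
    have h2 : max (x - t + h) 0 ≤ max (x - t) 0 + h :=
      max_le (by linarith [le_max_left (x - t) 0]) (by linarith [le_max_right (x - t) 0])
    rw [Real.norm_eq_abs, abs_div, abs_of_nonneg (by linarith), abs_of_pos hh]
    rw [div_le_one hh]; linarith
  · refine Eventually.of_forall fun x => ?_
    rcases le_or_gt t x with hx | hx
    · have he : ∀ᶠ h in nhdsWithin (0:ℝ) (Set.Ioi 0),
          (max (x - t + h) 0 - max (x - t) 0) / h = 1 := by
        filter_upwards [self_mem_nhdsWithin] with h (hh : 0 < h)
        rw [max_eq_left (by linarith), max_eq_left (by linarith)]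
        field_simp; ring
      refine Tendsto.congr' (Filter.EventuallyEq.symm he) ?_
      have hi : (Set.Ici t).indicator (fun _ => (1:ℝ)) x = 1 := Set.indicator_of_mem hx _
      rw [hi]
      exact tendsto_const_nhds
    · have he : ∀ᶠ h in nhdsWithin (0:ℝ) (Set.Ioi 0),
          (max (x - t + h) 0 - max (x - t) 0) / h = 0 := by
        filter_upwards [Ioo_mem_nhdsGT_of_mem ⟨le_refl (0:ℝ), show (0:ℝ) < t - x by linarith⟩]
          with h hh
        obtain ⟨h1, h2⟩ := hh
        rw [max_eq_right (by linarith), max_eq_right (by linarith)]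
        simp
      refine Tendsto.congr' (Filter.EventuallyEq.symm he) ?_
      have hxm : x ∉ Set.Ici t := by simpa using hx
      have hi : (Set.Ici t).indicator (fun _ => (1:ℝ)) x = 0 := Set.indicator_of_notMem hxm _
      rw [hi]
      exact tendsto_const_nhds

/-- If two compactly supported finite Borel measures on ℝ have the same integrals of
`x ↦ |x - t|` for every `t`, they are equal. -/
theorem stmt_0 (η₁ η₂ : Measure ℝ) [IsFiniteMeasure η₁] [IsFiniteMeasure η₂]
    (hc₁ : ∃ K : Set ℝ, IsCompact K ∧ η₁ Kᶜ = 0)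
    (hc₂ : ∃ K : Set ℝ, IsCompact K ∧ η₂ Kᶜ = 0)
    (h : ∀ t : ℝ, ∫ x, |x - t| ∂η₁ = ∫ x, |x - t| ∂η₂) :
    η₁ = η₂ := by
  obtain ⟨K₁, hK₁, h01⟩ := hc₁
  obtain ⟨K₂, hK₂, h02⟩ := hc₂
  obtain ⟨R₀, hR₀⟩ := ((hK₁.union hK₂).isBounded).subset_closedBall 0
  set R : ℝ := max R₀ 0 with hRdef
  have hR1 : K₁ ⊆ Metric.closedBall 0 R := fun x hx =>
    Metric.closedBall_subset_closedBall (le_max_left _ _) (hR₀ (Or.inl hx))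
  have hR2 : K₂ ⊆ Metric.closedBall 0 R := fun x hx =>
    Metric.closedBall_subset_closedBall (le_max_left _ _) (hR₀ (Or.inr hx))
  have eR := h R
  rw [large_t η₁ hK₁ h01 hR1 le_rfl, large_t η₂ hK₂ h02 hR2 le_rfl] at eR
  have eR1 := h (R + 1)
  rw [large_t η₁ hK₁ h01 hR1 (by linarith), large_t η₂ hK₂ h02 hR2 (by linarith)] at eR1
  have hm : (η₁ Set.univ).toReal = (η₂ Set.univ).toReal := by linarith
  have hM : ∫ x, x ∂η₁ = ∫ x, x ∂η₂ := by
    have : R * (η₁ Set.univ).toReal = R * (η₂ Set.univ).toReal := by rw [hm]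
    linarith
  have hG : ∀ t : ℝ, ∫ x, max (x - t) 0 ∂η₁ = ∫ x, max (x - t) 0 ∂η₂ := by
    intro t
    have ht := h t
    rw [decomp η₁ hK₁ h01 t, decomp η₂ hK₂ h02 t] at ht
    have : t * (η₁ Set.univ).toReal = t * (η₂ Set.univ).toReal := by rw [hm]
    linarith
  have hIci : ∀ t : ℝ, η₁ (Set.Ici t) = η₂ (Set.Ici t) := by
    intro t
    have hquot : ∀ hh : ℝ,
        ∫ x, (max (x - t + hh) 0 - max (x - t) 0) / hh ∂η₁
          = ∫ x, (max (x - t + hh) 0 - max (x - t) 0) / hh ∂η₂ := by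
      intro hh
      have c1 : Continuous fun x : ℝ => max (x - t + hh) 0 :=
        ((continuous_id.sub continuous_const).add continuous_const).max continuous_const
      have c2 : Continuous fun x : ℝ => max (x - t) 0 :=
        (continuous_id.sub continuous_const).max continuous_const
      rw [integral_div, integral_div,
        integral_sub (cont_integrable η₁ hK₁ h01 c1) (cont_integrable η₁ hK₁ h01 c2),
        integral_sub (cont_integrable η₂ hK₂ h02 c1) (cont_integrable η₂ hK₂ h02 c2)]
      have efun : (fun x : ℝ => max (x - (t - hh)) 0) = fun x : ℝ => max (x - t + hh) 0 := by
        funext x; congr 1; ring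
      have e1 : ∫ x, max (x - t + hh) 0 ∂η₁ = ∫ x, max (x - t + hh) 0 ∂η₂ := by
        have := hG (t - hh); rwa [efun] at this
      rw [e1, hG t]
    have t1 := tendsto_quot η₁ t
    have t2 := (tendsto_quot η₂ t).congr fun hh => (hquot hh).symm
    have := tendsto_nhds_unique t1 t2
    exact (ENNReal.toReal_eq_toReal_iff' (measure_ne_top η₁ _) (measure_ne_top η₂ _)).1 this
  exact Measure.ext_of_Ici η₁ η₂ hIci
end

section
/- Let V be a finite-dimensional complex vector space with a complete filtration 𝓕 with jumping values λ₁ ≤ ⋯ ≤ λ_r. Let H and H' be Hermitian inner products on V with H ≥ H' (as quadratic forms). Let H_s, respectively H'_s, for s ∈ [0, ∞), be the geodesic rays departing from H, respectively H', associated with 𝓕. Then H_s ≥ H'_s for all s ∈ [0, ∞). -/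
/-- A Hermitian inner product on a complex vector space, as a positive definite
conjugate-symmetric sesquilinear function. -/
def IsInnerForm {V : Type*} [AddCommGroup V] [Module ℂ V] (H : V → V → ℂ) : Prop :=
  (∀ x y z : V, H (x + y) z = H x z + H y z) ∧
  (∀ (c : ℂ) (x y : V), H (c • x) y = (starRingEnd ℂ) c * H x y) ∧
  (∀ x y : V, H y x = (starRingEnd ℂ) (H x y)) ∧
  (∀ x : V, x ≠ 0 → 0 < (H x x).re)

section Aux
set_option linter.unusedSectionVars false
variable {V : Type*} [AddCommGroup V] [Module ℂ V]

lemma IF.zero_left (G : V → V → ℂ)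
    (hadd : ∀ x y z : V, G (x + y) z = G x z + G y z) (y : V) : G 0 y = 0 := by
  have h := hadd 0 0 y
  simp only [add_zero] at h
  exact add_eq_right.mp h.symm

lemma IF.sum_left (G : V → V → ℂ)
    (hadd : ∀ x y z : V, G (x + y) z = G x z + G y z)
    {ι : Type*} (s : Finset ι) (f : ι → V) (y : V) :
    G (∑ i ∈ s, f i) y = ∑ i ∈ s, G (f i) y := by
  classical
  induction s using Finset.induction with
  | empty => simpa using IF.zero_left G hadd y
  | insert _ _ h ih => rw [Finset.sum_insert h, Finset.sum_insert h, hadd, ih]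

lemma IF.quad_eval (G : V → V → ℂ)
    (hadd : ∀ x y z : V, G (x + y) z = G x z + G y z)
    (hsmul : ∀ (c : ℂ) (x y : V), G (c • x) y = (starRingEnd ℂ) c * G x y)
    (hsymm : ∀ x y : V, G y x = (starRingEnd ℂ) (G x y))
    {n : ℕ} (f : Fin n → V) (d : Fin n → ℝ)
    (hg : ∀ i j, G (f i) (f j) = if i = j then (d i : ℂ) else 0)
    (c : Fin n → ℂ) :
    (G (∑ i, c i • f i) (∑ i, c i • f i)).re = ∑ i, ‖c i‖ ^ 2 * d i := by
  classical
  have hinner : ∀ i : Fin n, G (f i) (∑ j, c j • f j) = c i * (d i : ℂ) := by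
    intro i
    rw [hsymm, IF.sum_left G hadd]
    have : ∀ j : Fin n, G (c j • f j) (f i) = (starRingEnd ℂ) (c j) * (if j = i then (d j : ℂ) else 0) := by
      intro j; rw [hsmul, hg]
    simp only [this]
    rw [map_sum]
    rw [Finset.sum_eq_single i]
    · simp
    · intro j _ hj
      simp [hj]
    · simp
  have houter : G (∑ i, c i • f i) (∑ j, c j • f j) =
      ∑ i, (starRingEnd ℂ) (c i) * (c i * (d i : ℂ)) := by
    rw [IF.sum_left G hadd]
    apply Finset.sum_congr rfl
    intro i _
    rw [hsmul, hinner]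
  rw [houter, Complex.re_sum]
  apply Finset.sum_congr rfl
  intro i _
  have : (starRingEnd ℂ) (c i) * (c i * (d i : ℂ)) = ((‖c i‖ ^ 2 : ℝ) : ℂ) * (d i : ℂ) := by
    rw [← mul_assoc, ← Complex.normSq_eq_conj_mul_self, Complex.normSq_eq_norm_sq]
  rw [this, ← Complex.ofReal_mul, Complex.ofReal_re]

lemma IF.linearIndependent (G : V → V → ℂ)
    (hadd : ∀ x y z : V, G (x + y) z = G x z + G y z)
    (hsmul : ∀ (c : ℂ) (x y : V), G (c • x) y = (starRingEnd ℂ) c * G x y)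
    {n : ℕ} (f : Fin n → V)
    (hg : ∀ i j, G (f i) (f j) = if i = j then 1 else 0) :
    LinearIndependent ℂ f := by
  classical
  rw [Fintype.linearIndependent_iff]
  intro g hgsum j
  have h := IF.sum_left G hadd Finset.univ (fun i => g i • f i) (f j)
  rw [hgsum, IF.zero_left G hadd] at h
  have h2 : ∑ i, G (g i • f i) (f j) = (starRingEnd ℂ) (g j) := by
    rw [Finset.sum_congr rfl (fun i _ => by rw [hsmul, hg])]
    simp [mul_ite]
  rw [h2] at h
  have : (starRingEnd ℂ) (g j) = 0 := h.symm
  simpa using congrArg (starRingEnd ℂ) this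

end Aux

/-- Let `𝓕` be a complete filtration of a finite-dimensional complex vector space `V`
with nondecreasing jumping values `lam`, and let `H ≥ H'` be Hermitian inner products
with `𝓕`-adapted orthonormal bases `e` resp. `e'`. The geodesic rays `Hs`, `H's`
departing from `H`, `H'` associated with `𝓕` (characterized by the Gram conditions
`Hs s (e i) (e j) = exp(−s·lam i) δ_{ij}`, i.e. `e i · exp(s·lam i / 2)` is
`Hs s`-orthonormal) satisfy `Hs s ≥ H's s` for every `s ≥ 0`. -/
theorem stmt_11 {V : Type*} [AddCommGroup V] [Module ℂ V] [FiniteDimensional ℂ V]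
    {r : ℕ} (lam : Fin r → ℝ) (hmono : Monotone lam)
    (𝓕 : ℝ → Submodule ℂ V) (e e' : Fin r → V)
    (H H' : V → V → ℂ) (hH : IsInnerForm H) (hH' : IsInnerForm H')
    (he : ∀ i j, H (e i) (e j) = if i = j then 1 else 0)
    (he' : ∀ i j, H' (e' i) (e' j) = if i = j then 1 else 0)
    (hsp : Submodule.span ℂ (Set.range e) = ⊤)
    (hsp' : Submodule.span ℂ (Set.range e') = ⊤)
    (hflag : ∀ t : ℝ, 𝓕 t = Submodule.span ℂ {x | ∃ i, t ≤ lam i ∧ x = e i})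
    (hflag' : ∀ t : ℝ, 𝓕 t = Submodule.span ℂ {x | ∃ i, t ≤ lam i ∧ x = e' i})
    (hord : ∀ v : V, (H' v v).re ≤ (H v v).re)
    (Hs H's : ℝ → V → V → ℂ)
    (hHs : ∀ s : ℝ, 0 ≤ s → IsInnerForm (Hs s))
    (hH's : ∀ s : ℝ, 0 ≤ s → IsInnerForm (H's s))
    (hGram : ∀ (s : ℝ) (i j), Hs s (e i) (e j) =
      if i = j then (Real.exp (-(s * lam i)) : ℝ) else 0)
    (hGram' : ∀ (s : ℝ) (i j), H's s (e' i) (e' j) =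
      if i = j then (Real.exp (-(s * lam i)) : ℝ) else 0) :
    ∀ s : ℝ, 0 ≤ s → ∀ v : V, (H's s v v).re ≤ (Hs s v v).re := by
  classical
  -- orthonormal bases
  have hliE : LinearIndependent ℂ e := IF.linearIndependent H hH.1 hH.2.1 e he
  have hliE' : LinearIndependent ℂ e' := IF.linearIndependent H' hH'.1 hH'.2.1 e' he'
  let B : Module.Basis (Fin r) ℂ V := Module.Basis.mk hliE (by rw [hsp])
  let B' : Module.Basis (Fin r) ℂ V := Module.Basis.mk hliE' (by rw [hsp'])
  have hBe : ⇑B = e := funext fun i => Module.Basis.mk_apply hliE _ i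
  have hBe' : ⇑B' = e' := funext fun i => Module.Basis.mk_apply hliE' _ i
  intro s hs v
  set a : Fin r → ℂ := fun i => B.repr v i with ha
  set b : Fin r → ℂ := fun i => B'.repr v i with hb
  have hv : ∑ i, a i • e i = v := by rw [← hBe]; exact B.sum_repr v
  have hv' : ∑ i, b i • e' i = v := by rw [← hBe']; exact B'.sum_repr v
  -- heads-sum comparison
  have hhead : ∀ m : ℕ, (hm : m < r) →
      (∀ i j : Fin r, (i : ℕ) < m → m ≤ (j : ℕ) → lam i < lam j) →
      ∑ i : Fin r, (if (i : ℕ) < m then ‖b i‖ ^ 2 else 0) ≤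
        ∑ i : Fin r, (if (i : ℕ) < m then ‖a i‖ ^ 2 else 0) := by
    intro m hm hbr
    set S : Set (Fin r) := {i | m ≤ (i : ℕ)} with hS
    have hset : {x | ∃ i, lam ⟨m, hm⟩ ≤ lam i ∧ x = e i} = e '' S := by
      ext x
      constructor
      · rintro ⟨i, hle, rfl⟩
        refine ⟨i, ?_, rfl⟩
        by_contra hi
        have hi' : (i : ℕ) < m := by simpa [hS] using hi
        exact absurd hle (not_le.mpr (hbr i ⟨m, hm⟩ hi' (le_refl m)))
      · rintro ⟨i, hi, rfl⟩
        exact ⟨i, hmono (by simpa [Fin.le_def, hS] using hi), rfl⟩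
    have hset' : {x | ∃ i, lam ⟨m, hm⟩ ≤ lam i ∧ x = e' i} = e' '' S := by
      ext x
      constructor
      · rintro ⟨i, hle, rfl⟩
        refine ⟨i, ?_, rfl⟩
        by_contra hi
        have hi' : (i : ℕ) < m := by simpa [hS] using hi
        exact absurd hle (not_le.mpr (hbr i ⟨m, hm⟩ hi' (le_refl m)))
      · rintro ⟨i, hi, rfl⟩
        exact ⟨i, hmono (by simpa [Fin.le_def, hS] using hi), rfl⟩
    have hTT : Submodule.span ℂ (e '' S) = Submodule.span ℂ (e' '' S) := by
      rw [← hset, ← hset', ← hflag (lam ⟨m, hm⟩), ← hflag' (lam ⟨m, hm⟩)]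
    set u : V := ∑ i : Fin r, (if (i : ℕ) < m then a i else 0) • e i with hu
    set w : V := ∑ i : Fin r, (if m ≤ (i : ℕ) then a i else 0) • e i with hw
    have huw : u + w = v := by
      rw [hu, hw, ← Finset.sum_add_distrib, ← hv]
      apply Finset.sum_congr rfl
      intro i _
      by_cases hi : (i : ℕ) < m
      · simp [hi, Nat.not_le.mpr hi]
      · simp [hi, Nat.not_lt.mp hi]
    have hwmem : w ∈ Submodule.span ℂ (e' '' S) := by
      rw [← hTT, hw]
      refine Submodule.sum_mem _ fun i _ => ?_
      by_cases hi : m ≤ (i : ℕ)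
      · exact Submodule.smul_mem _ _ (Submodule.subset_span ⟨i, hi, rfl⟩)
      · simp [hi]
    have hrepr'w : ∀ i : Fin r, (i : ℕ) < m → B'.repr w i = 0 := by
      intro i hi
      have hmem : w ∈ Submodule.span ℂ (⇑B' '' S) := by rwa [hBe']
      have hsupp := B'.mem_span_image.mp hmem
      by_contra h0
      have : i ∈ S := hsupp (Finsupp.mem_support_iff.mpr h0)
      exact absurd hi (Nat.not_lt.mpr this)
    have hrepru' : ∀ i : Fin r, (i : ℕ) < m → B'.repr u i = b i := by
      intro i hi
      have hu2 : u = v - w := eq_sub_of_add_eq huw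
      rw [hu2, map_sub, Finsupp.sub_apply, hrepr'w i hi, sub_zero, hb]
    have hu1 : (H u u).re = ∑ i : Fin r, (if (i : ℕ) < m then ‖a i‖ ^ 2 else 0) := by
      rw [hu, IF.quad_eval H hH.1 hH.2.1 hH.2.2.1 e (fun _ => 1)
        (fun i j => by rw [he]; norm_num) (fun i => if (i : ℕ) < m then a i else 0)]
      apply Finset.sum_congr rfl
      intro i _
      by_cases hi : (i : ℕ) < m <;> simp [hi]
    have hu2 : (H' u u).re = ∑ i : Fin r, ‖B'.repr u i‖ ^ 2 := by
      conv_lhs => rw [show u = ∑ i, B'.repr u i • e' i by rw [← hBe']; exact (B'.sum_repr u).symm]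
      rw [IF.quad_eval H' hH'.1 hH'.2.1 hH'.2.2.1 e' (fun _ => 1)
        (fun i j => by rw [he']; norm_num) (fun i => B'.repr u i)]
      simp
    have hchain : ∑ i : Fin r, (if (i : ℕ) < m then ‖b i‖ ^ 2 else 0) ≤ (H' u u).re := by
      rw [hu2]
      apply Finset.sum_le_sum
      intro i _
      by_cases hi : (i : ℕ) < m
      · rw [if_pos hi, ← hrepru' i hi]
      · rw [if_neg hi]; positivity
    calc ∑ i : Fin r, (if (i : ℕ) < m then ‖b i‖ ^ 2 else 0) ≤ (H' u u).re := hchain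
      _ ≤ (H u u).re := hord u
      _ = _ := hu1
  -- full-sum comparison
  have hfull : ∑ i : Fin r, ‖b i‖ ^ 2 ≤ ∑ i : Fin r, ‖a i‖ ^ 2 := by
    have h1 : (H v v).re = ∑ i : Fin r, ‖a i‖ ^ 2 := by
      conv_lhs => rw [← hv]
      rw [IF.quad_eval H hH.1 hH.2.1 hH.2.2.1 e (fun _ => 1)
        (fun i j => by rw [he]; norm_num) a]
      simp
    have h2 : (H' v v).re = ∑ i : Fin r, ‖b i‖ ^ 2 := by
      conv_lhs => rw [← hv']
      rw [IF.quad_eval H' hH'.1 hH'.2.1 hH'.2.2.1 e' (fun _ => 1)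
        (fun i j => by rw [he']; norm_num) b]
      simp
    rw [← h1, ← h2]
    exact hord v
  -- evaluate geodesic quadratic forms
  have h1 : (Hs s v v).re = ∑ i : Fin r, ‖a i‖ ^ 2 * Real.exp (-(s * lam i)) := by
    conv_lhs => rw [← hv]
    exact IF.quad_eval (Hs s) (hHs s hs).1 (hHs s hs).2.1 (hHs s hs).2.2.1 e
      (fun i => Real.exp (-(s * lam i))) (fun i j => by
        rw [hGram s i j, apply_ite Complex.ofReal, Complex.ofReal_zero]) a
  have h2 : (H's s v v).re = ∑ i : Fin r, ‖b i‖ ^ 2 * Real.exp (-(s * lam i)) := by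
    conv_lhs => rw [← hv']
    exact IF.quad_eval (H's s) (hH's s hs).1 (hH's s hs).2.1 (hH's s hs).2.2.1 e'
      (fun i => Real.exp (-(s * lam i))) (fun i j => by
        rw [hGram' s i j, apply_ite Complex.ofReal, Complex.ofReal_zero]) b
  rw [h1, h2]
  -- pass to ℕ-indexed sums
  set xa : ℕ → ℝ := fun i => if h : i < r then ‖a ⟨i, h⟩‖ ^ 2 else 0 with hxa
  set xb : ℕ → ℝ := fun i => if h : i < r then ‖b ⟨i, h⟩‖ ^ 2 else 0 with hxb
  set dd : ℕ → ℝ := fun i => if h : i < r then Real.exp (-(s * lam ⟨i, h⟩)) else 0 with hdd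
  have hddnn : ∀ k, 0 ≤ dd k := by
    intro k; rw [hdd]; dsimp only
    split
    · exact (Real.exp_pos _).le
    · exact le_refl 0
  have hconv : ∀ (y : ℕ → ℝ) (m : ℕ), m ≤ r →
      ∑ j ∈ Finset.range m, y j = ∑ i : Fin r, (if (i : ℕ) < m then y i else 0) := by
    intro y m hm
    calc ∑ j ∈ Finset.range m, y j
        = ∑ j ∈ Finset.range m, (if j < m then y j else 0) :=
          Finset.sum_congr rfl (fun j hj => (if_pos (Finset.mem_range.mp hj)).symm)
      _ = ∑ j ∈ Finset.range r, (if j < m then y j else 0) :=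
          Finset.sum_subset (Finset.range_subset_range.mpr hm)
            (fun x _ hx => if_neg (fun hc => hx (Finset.mem_range.mpr hc)))
      _ = ∑ i : Fin r, (if (i : ℕ) < m then y i else 0) :=
          (Fin.sum_univ_eq_sum_range _ r).symm
  have hxaeq : ∀ i : Fin r, xa ↑i = ‖a i‖ ^ 2 := by
    intro i; rw [hxa]; dsimp only; rw [dif_pos i.isLt]
  have hxbeq : ∀ i : Fin r, xb ↑i = ‖b i‖ ^ 2 := by
    intro i; rw [hxb]; dsimp only; rw [dif_pos i.isLt]
  have hgb : ∑ i : Fin r, ‖b i‖ ^ 2 * Real.exp (-(s * lam i)) =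
      ∑ j ∈ Finset.range r, dd j • xb j := by
    rw [← Fin.sum_univ_eq_sum_range (fun j => dd j • xb j) r]
    refine Finset.sum_congr rfl fun i _ => ?_
    rw [smul_eq_mul, hxbeq i, hdd]; dsimp only; rw [dif_pos i.isLt, mul_comm]
  have hga : ∑ i : Fin r, ‖a i‖ ^ 2 * Real.exp (-(s * lam i)) =
      ∑ j ∈ Finset.range r, dd j • xa j := by
    rw [← Fin.sum_univ_eq_sum_range (fun j => dd j • xa j) r]
    refine Finset.sum_congr rfl fun i _ => ?_
    rw [smul_eq_mul, hxaeq i, hdd]; dsimp only; rw [dif_pos i.isLt, mul_comm]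
  rw [hgb, hga, Finset.sum_range_by_parts dd xb r, Finset.sum_range_by_parts dd xa r]
  have hPb : ∀ m : ℕ, m ≤ r →
      ∑ j ∈ Finset.range m, xb j = ∑ i : Fin r, (if (i : ℕ) < m then ‖b i‖ ^ 2 else 0) := by
    intro m hm
    rw [hconv xb m hm]
    exact Finset.sum_congr rfl fun i _ => by rw [hxbeq i]
  have hPa : ∀ m : ℕ, m ≤ r →
      ∑ j ∈ Finset.range m, xa j = ∑ i : Fin r, (if (i : ℕ) < m then ‖a i‖ ^ 2 else 0) := by
    intro m hm
    rw [hconv xa m hm]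
    exact Finset.sum_congr rfl fun i _ => by rw [hxaeq i]
  have hA : dd (r - 1) • ∑ j ∈ Finset.range r, xb j ≤
      dd (r - 1) • ∑ j ∈ Finset.range r, xa j := by
    rw [smul_eq_mul, smul_eq_mul]
    refine mul_le_mul_of_nonneg_left ?_ (hddnn _)
    rw [hPa r le_rfl, hPb r le_rfl]
    calc ∑ i : Fin r, (if (i : ℕ) < r then ‖b i‖ ^ 2 else 0)
        = ∑ i : Fin r, ‖b i‖ ^ 2 := Finset.sum_congr rfl fun i _ => if_pos i.isLt
      _ ≤ ∑ i : Fin r, ‖a i‖ ^ 2 := hfull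
      _ = ∑ i : Fin r, (if (i : ℕ) < r then ‖a i‖ ^ 2 else 0) :=
          (Finset.sum_congr rfl fun i _ => if_pos i.isLt).symm
  have hB : ∑ k ∈ Finset.range (r - 1), (dd (k + 1) - dd k) • ∑ j ∈ Finset.range (k + 1), xa j ≤
      ∑ k ∈ Finset.range (r - 1), (dd (k + 1) - dd k) • ∑ j ∈ Finset.range (k + 1), xb j := by
    refine Finset.sum_le_sum fun k hk => ?_
    have hk1 : k + 1 < r := by have := Finset.mem_range.mp hk; omega
    have hk0 : k < r := by omega
    rw [smul_eq_mul, smul_eq_mul]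
    have hdle : dd (k + 1) ≤ dd k := by
      rw [hdd]; dsimp only; rw [dif_pos hk1, dif_pos hk0]
      refine Real.exp_le_exp.mpr (neg_le_neg ?_)
      exact mul_le_mul_of_nonneg_left (hmono (by simp [Fin.mk_le_mk])) hs
    rcases eq_or_lt_of_le hdle with heq | hlt
    · rw [heq]; simp
    · have hllt : lam ⟨k, hk0⟩ < lam ⟨k + 1, hk1⟩ := by
        by_contra hcon
        have h1 : lam ⟨k + 1, hk1⟩ ≤ lam ⟨k, hk0⟩ := not_lt.mp hcon
        have h2 : dd k ≤ dd (k + 1) := by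
          rw [hdd]; dsimp only; rw [dif_pos hk1, dif_pos hk0]
          refine Real.exp_le_exp.mpr (neg_le_neg ?_)
          exact mul_le_mul_of_nonneg_left h1 hs
        exact absurd hlt (not_lt.mpr h2)
      have hbrk : ∀ i j : Fin r, (i : ℕ) < k + 1 → k + 1 ≤ (j : ℕ) → lam i < lam j := by
        intro i j hi hj
        calc lam i ≤ lam ⟨k, hk0⟩ := hmono (by simp only [Fin.le_def]; omega)
          _ < lam ⟨k + 1, hk1⟩ := hllt
          _ ≤ lam j := hmono (by simp only [Fin.le_def]; omega)
      refine mul_le_mul_of_nonpos_left ?_ (sub_nonpos.mpr hdle)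
      rw [hPa (k + 1) (by omega), hPb (k + 1) (by omega)]
      exact hhead (k + 1) hk1 hbrk
  exact sub_le_sub hA hB
end

section
/- Let p : V → Q be a surjective linear map of finite-dimensional complex vector spaces, H a Hermitian inner product on V, and [H] the quotient Hermitian inner product on Q. Let 𝓕 be a complete filtration on V with quotient filtration [𝓕] on Q, let H_s^V be the geodesic ray on V departing from H associated with 𝓕, and let H_s^Q be the geodesic ray on Q departing from [H] associated with [𝓕]. Then for all s ∈ [0, ∞), the quotient metric [H_s^V] on Q satisfies [H_s^V] ≥ H_s^Q. -/
open Finset MeasureTheory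

/-- Expansion of a sesquilinear form on finite sums. -/
private lemma form_expand {V : Type*} [AddCommGroup V] [Module ℂ V] (G : V → V → ℂ)
    (hadd : ∀ x y z : V, G (x + y) z = G x z + G y z)
    (hsmul : ∀ (c : ℂ) (x y : V), G (c • x) y = (starRingEnd ℂ) c * G x y)
    (hherm : ∀ x y : V, G y x = (starRingEnd ℂ) (G x y))
    {n : ℕ} (v : Fin n → V) (a b : Fin n → ℂ) :
    G (∑ i, a i • v i) (∑ j, b j • v j)
      = ∑ i, ∑ j, (starRingEnd ℂ) (a i) * (b j * G (v i) (v j)) := by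
  have h1 : ∀ (z : V) (c : Fin n → ℂ),
      G (∑ i, c i • v i) z = ∑ i, (starRingEnd ℂ) (c i) * G (v i) z := by
    intro z c
    have := map_sum (AddMonoidHom.mk' (fun x => G x z) (fun x y => hadd x y z))
      (fun i => c i • v i) Finset.univ
    simp only [AddMonoidHom.mk'_apply] at this
    rw [this]
    exact Finset.sum_congr rfl fun i _ => hsmul _ _ _
  have hsmul2 : ∀ (c : ℂ) (x y : V), G x (c • y) = c * G x y := by
    intro c x y
    calc G x (c • y) = (starRingEnd ℂ) (G (c • y) x) := hherm _ _
      _ = (starRingEnd ℂ) ((starRingEnd ℂ) c * G y x) := by rw [hsmul]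
      _ = c * (starRingEnd ℂ) (G y x) := by rw [map_mul, Complex.conj_conj]
      _ = c * G x y := by rw [← hherm]
  have hadd2 : ∀ x y z : V, G x (y + z) = G x y + G x z := by
    intro x y z
    calc G x (y + z) = (starRingEnd ℂ) (G (y + z) x) := hherm _ _
      _ = (starRingEnd ℂ) (G y x + G z x) := by rw [hadd]
      _ = (starRingEnd ℂ) (G y x) + (starRingEnd ℂ) (G z x) := by rw [map_add]
      _ = G x y + G x z := by rw [← hherm, ← hherm]
  have h2 : ∀ (x : V), G x (∑ j, b j • v j) = ∑ j, b j * G x (v j) := by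
    intro x
    have := map_sum (AddMonoidHom.mk' (fun y => G x y) (fun y z => hadd2 x y z))
      (fun j => b j • v j) Finset.univ
    simp only [AddMonoidHom.mk'_apply] at this
    rw [this]
    exact Finset.sum_congr rfl fun j _ => hsmul2 _ _ _
  rw [h1]
  refine Finset.sum_congr rfl fun i _ => ?_
  rw [h2, Finset.mul_sum]

/-- Value of a sesquilinear form with diagonal real Gram matrix. -/
private lemma form_diag {V : Type*} [AddCommGroup V] [Module ℂ V] (G : V → V → ℂ)
    (hadd : ∀ x y z : V, G (x + y) z = G x z + G y z)
    (hsmul : ∀ (c : ℂ) (x y : V), G (c • x) y = (starRingEnd ℂ) c * G x y)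
    (hherm : ∀ x y : V, G y x = (starRingEnd ℂ) (G x y))
    {n : ℕ} (v : Fin n → V) (w : Fin n → ℝ)
    (hGram : ∀ i j, G (v i) (v j) = if i = j then (w i : ℂ) else 0) (a : Fin n → ℂ) :
    (G (∑ i, a i • v i) (∑ i, a i • v i)).re = ∑ i, Complex.normSq (a i) * w i := by
  rw [form_expand G hadd hsmul hherm v a a, Complex.re_sum]
  refine Finset.sum_congr rfl fun i _ => ?_
  have hinner : (∑ j, (starRingEnd ℂ) (a i) * (a j * G (v i) (v j)))
      = (starRingEnd ℂ) (a i) * (a i * (w i : ℂ)) := by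
    rw [Finset.sum_eq_single i]
    · rw [hGram, if_pos rfl]
    · intro j _ hj
      rw [hGram, if_neg (Ne.symm hj)]
      ring
    · intro hi; exact absurd (Finset.mem_univ i) hi
  rw [hinner, ← mul_assoc, ← Complex.normSq_eq_conj_mul_self, ← Complex.ofReal_mul,
    Complex.ofReal_re]

private lemma form_nonneg {V : Type*} [AddCommGroup V] [Module ℂ V] {H : V → V → ℂ}
    (hH : IsInnerForm H) (x : V) : 0 ≤ (H x x).re := by
  by_cases hx : x = 0
  · have h0 : H 0 0 = 0 := by
      have := hH.1 0 0 0
      rw [add_zero] at this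
      have := left_eq_add.mp this
      exact this
    rw [hx, h0]; simp
  · exact (hH.2.2.2 x hx).le

private lemma integrable_ray {s : ℝ} (hs : 0 < s) (c lam0 : ℝ) :
    Integrable ((Set.Ioi lam0).indicator
      (fun t : ℝ => c * (s * Real.exp (-(s * t))))) := by
  rw [integrable_indicator_iff measurableSet_Ioi]
  have h1 : IntegrableOn (fun t : ℝ => Real.exp (-(s * t))) (Set.Ioi lam0) := by
    simpa [neg_mul] using exp_neg_integrableOn_Ioi lam0 hs
  exact (h1.const_mul s).const_mul c

private lemma integral_ray {s : ℝ} (hs : 0 < s) (c lam0 : ℝ) :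
    (∫ t : ℝ, (Set.Ioi lam0).indicator (fun t : ℝ => c * (s * Real.exp (-(s * t)))) t)
      = c * Real.exp (-(s * lam0)) := by
  rw [MeasureTheory.integral_indicator measurableSet_Ioi]
  have key : (∫ t in Set.Ioi lam0, Real.exp (-(s * t))) = s⁻¹ * Real.exp (-(s * lam0)) := by
    have h := integral_comp_mul_left_Ioi (fun u : ℝ => Real.exp (-u)) lam0 hs
    rw [integral_exp_neg_Ioi] at h
    simpa [smul_eq_mul] using h
  rw [MeasureTheory.integral_const_mul, MeasureTheory.integral_const_mul, key,
    ← mul_assoc s s⁻¹, mul_inv_cancel₀ hs.ne', one_mul]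

/-- Let `p : V → Q` be a surjective linear map of finite-dimensional complex vector
spaces, `H` a Hermitian inner product on `V` with quotient Hermitian inner product `HQ`
on `Q` (so `HQ f f = inf {H g g : p g = f}`), and `𝓕` a complete filtration of `V`
(given by an `H`-orthonormal adapted basis `e` with nondecreasing weights `lam`, so
`𝓕 t = span {e i : lam i ≥ t}`), with quotient filtration `[𝓕] = p(𝓕)` on `Q` (given by
an `HQ`-orthonormal adapted basis `ε` with nondecreasing weights `nu`). Let `HsV` be the
geodesic ray on `V` departing from `H` associated with `𝓕`, and `HsQ` the geodesic ray on
`Q` departing from `HQ` associated with `[𝓕]` (both characterized by Gram conditions).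
Then for every `s ≥ 0` the quotient metric of `HsV s` dominates `HsQ s`:
`HsQ s (f, f) ≤ inf {HsV s (g, g) : p g = f}`. -/
theorem stmt_13 {V Q : Type*} [AddCommGroup V] [Module ℂ V] [FiniteDimensional ℂ V]
    [AddCommGroup Q] [Module ℂ Q] [FiniteDimensional ℂ Q]
    (p : V →ₗ[ℂ] Q) (hp : Function.Surjective p)
    {r q : ℕ} (lam : Fin r → ℝ) (hlam : Monotone lam) (nu : Fin q → ℝ) (hnu : Monotone nu)
    (e : Fin r → V) (ε : Fin q → Q)
    (H : V → V → ℂ) (hH : IsInnerForm H)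
    (he : ∀ i j, H (e i) (e j) = if i = j then 1 else 0)
    (hsp : Submodule.span ℂ (Set.range e) = ⊤)
    (HQ : Q → Q → ℂ) (hHQ : IsInnerForm HQ)
    (hquot : ∀ f : Q, (HQ f f).re = sInf {c : ℝ | ∃ g : V, p g = f ∧ c = (H g g).re})
    (hε : ∀ i j, HQ (ε i) (ε j) = if i = j then 1 else 0)
    (hspQ : Submodule.span ℂ (Set.range ε) = ⊤)
    (hflagQ : ∀ t : ℝ,
      Submodule.map p (Submodule.span ℂ {x | ∃ i, t ≤ lam i ∧ x = e i}) =
        Submodule.span ℂ {y | ∃ i, t ≤ nu i ∧ y = ε i})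
    (HsV : ℝ → V → V → ℂ) (HsQ : ℝ → Q → Q → ℂ)
    (hHsV : ∀ s : ℝ, 0 ≤ s → IsInnerForm (HsV s))
    (hHsQ : ∀ s : ℝ, 0 ≤ s → IsInnerForm (HsQ s))
    (hGramV : ∀ (s : ℝ) (i j), HsV s (e i) (e j) =
      if i = j then (Real.exp (-(s * lam i)) : ℝ) else 0)
    (hGramQ : ∀ (s : ℝ) (i j), HsQ s (ε i) (ε j) =
      if i = j then (Real.exp (-(s * nu i)) : ℝ) else 0) :
    ∀ s : ℝ, 0 ≤ s → ∀ f : Q,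
      (HsQ s f f).re ≤ sInf {c : ℝ | ∃ g : V, p g = f ∧ c = (HsV s g g).re} := by
  classical
  intro s hs f
  obtain ⟨hVadd, hVsmul, hVherm, hVpos⟩ := hHsV s hs
  obtain ⟨hQadd, hQsmul, hQherm, hQpos⟩ := hHsQ s hs
  obtain ⟨g0, hg0⟩ := hp f
  refine le_csInf ⟨_, g0, hg0, rfl⟩ ?_
  rintro x ⟨g, hgf, rfl⟩
  -- coordinates
  obtain ⟨a, ha⟩ := (Submodule.mem_span_range_iff_exists_fun ℂ).mp
    (show g ∈ Submodule.span ℂ (Set.range e) by rw [hsp]; exact Submodule.mem_top)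
  obtain ⟨b, hb⟩ := (Submodule.mem_span_range_iff_exists_fun ℂ).mp
    (show f ∈ Submodule.span ℂ (Set.range ε) by rw [hspQ]; exact Submodule.mem_top)
  have hVval : (HsV s g g).re = ∑ i, Complex.normSq (a i) * Real.exp (-(s * lam i)) := by
    rw [← ha]
    exact form_diag _ hVadd hVsmul hVherm e _ (fun i j => by rw [hGramV s i j, apply_ite Complex.ofReal, Complex.ofReal_zero]) a
  have hQval : (HsQ s f f).re = ∑ j, Complex.normSq (b j) * Real.exp (-(s * nu j)) := by
    rw [← hb]
    exact form_diag _ hQadd hQsmul hQherm ε _ (fun i j => by rw [hGramQ s i j, apply_ite Complex.ofReal, Complex.ofReal_zero]) b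
  -- key comparison of filtration weights
  have key : ∀ t : ℝ,
      (∑ j ∈ Finset.univ.filter (fun j => nu j < t), Complex.normSq (b j))
        ≤ ∑ i ∈ Finset.univ.filter (fun i => lam i < t), Complex.normSq (a i) := by
    intro t
    set a' : Fin r → ℂ := fun i => if t ≤ lam i then 0 else a i with ha'
    set h : V := ∑ i ∈ Finset.univ.filter (fun i => t ≤ lam i), a i • e i with hh
    have hgh : g - h = ∑ i, a' i • e i := by
      rw [← ha, hh,
        ← Finset.sum_filter_add_sum_filter_not Finset.univ (fun i => t ≤ lam i)
          (fun i => a i • e i), add_sub_cancel_left, Finset.sum_filter]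
      refine Finset.sum_congr rfl fun i _ => ?_
      by_cases hi : t ≤ lam i <;> simp [a', hi]
    have hAval : (H (g - h) (g - h)).re
        = ∑ i ∈ Finset.univ.filter (fun i => lam i < t), Complex.normSq (a i) := by
      rw [hgh, form_diag H hH.1 hH.2.1 hH.2.2.1 e (fun _ => (1 : ℝ))
        (fun i j => by simpa using he i j) a', Finset.sum_filter]
      refine Finset.sum_congr rfl fun i _ => ?_
      by_cases hi : t ≤ lam i
      · simp [a', hi, not_lt.mpr hi]
      · simp [a', hi, not_le.mp hi]
    have hmem : p h ∈ Submodule.span ℂ {y | ∃ j, t ≤ nu j ∧ y = ε j} := by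
      rw [← hflagQ t]
      refine Submodule.mem_map_of_mem (Submodule.sum_mem _ fun i hi => ?_)
      exact Submodule.smul_mem _ _
        (Submodule.subset_span ⟨i, (Finset.mem_filter.mp hi).2, rfl⟩)
    have hset : {y | ∃ j, t ≤ nu j ∧ y = ε j}
        = Set.range (fun j : {j : Fin q // t ≤ nu j} => ε j.1) := by
      ext y
      constructor
      · rintro ⟨j, hj, rfl⟩; exact ⟨⟨j, hj⟩, rfl⟩
      · rintro ⟨⟨j, hj⟩, rfl⟩; exact ⟨j, hj, rfl⟩
    rw [hset] at hmem
    obtain ⟨d, hd⟩ := (Submodule.mem_span_range_iff_exists_fun ℂ).mp hmem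
    set d' : Fin q → ℂ := fun j => if hj : t ≤ nu j then d ⟨j, hj⟩ else 0 with hd'
    have hph : p h = ∑ j, d' j • ε j := by
      rw [← hd]
      calc (∑ j : {j : Fin q // t ≤ nu j}, d j • ε j.1)
          = ∑ j : {j : Fin q // t ≤ nu j}, d' j.1 • ε j.1 :=
            Finset.sum_congr rfl fun j _ => by rw [hd']; simp only [dif_pos j.2, Subtype.coe_eta]
        _ = ∑ j ∈ Finset.univ.filter (fun j => t ≤ nu j), d' j • ε j :=
            (Finset.sum_subtype (p := fun j => t ≤ nu j)
              (Finset.univ.filter (fun j => t ≤ nu j)) (fun x => by simp)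
              (fun j => d' j • ε j)).symm
        _ = ∑ j, d' j • ε j := by
            apply Finset.sum_subset (Finset.filter_subset _ _)
            intro j _ hj
            have hj' : ¬ t ≤ nu j := by simpa using hj
            simp [d', hj']
    have hfd : f - p h = ∑ j, (b j - d' j) • ε j := by
      rw [hph, ← hb, ← Finset.sum_sub_distrib]
      exact Finset.sum_congr rfl fun j _ => (sub_smul _ _ _).symm
    have hBle : (∑ j ∈ Finset.univ.filter (fun j => nu j < t), Complex.normSq (b j))
        ≤ (HQ (f - p h) (f - p h)).re := by
      rw [hfd, form_diag HQ hHQ.1 hHQ.2.1 hHQ.2.2.1 ε (fun _ => (1 : ℝ))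
        (fun i j => by simpa using hε i j) _]
      have step : (∑ j ∈ Finset.univ.filter (fun j => nu j < t), Complex.normSq (b j))
          = ∑ j ∈ Finset.univ.filter (fun j => nu j < t),
              Complex.normSq (b j - d' j) * 1 := by
        refine Finset.sum_congr rfl fun j hj => ?_
        have hj' : ¬ t ≤ nu j := not_le.mpr (Finset.mem_filter.mp hj).2
        simp [d', hj']
      rw [step]
      exact Finset.sum_le_sum_of_subset_of_nonneg (Finset.filter_subset _ _)
        (fun j _ _ => mul_nonneg (Complex.normSq_nonneg _) zero_le_one)
    have hQleH : (HQ (f - p h) (f - p h)).re ≤ (H (g - h) (g - h)).re := by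
      have hfp : f - p h = p (g - h) := by rw [map_sub, hgf]
      rw [hfp, hquot]
      apply csInf_le
      · refine ⟨0, ?_⟩
        rintro x ⟨g', -, rfl⟩
        exact form_nonneg hH g'
      · exact ⟨g - h, rfl, rfl⟩
    calc (∑ j ∈ Finset.univ.filter (fun j => nu j < t), Complex.normSq (b j))
        ≤ (HQ (f - p h) (f - p h)).re := hBle
      _ ≤ (H (g - h) (g - h)).re := hQleH
      _ = _ := hAval
  rw [hVval, hQval]
  rcases eq_or_lt_of_le hs with hs0 | hs0
  · -- s = 0
    rw [← hs0]
    simp only [zero_mul, neg_zero, Real.exp_zero, mul_one]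
    obtain ⟨M1, hM1⟩ := (Set.finite_range lam).bddAbove
    obtain ⟨M2, hM2⟩ := (Set.finite_range nu).bddAbove
    have h := key (max M1 M2 + 1)
    rw [Finset.filter_true_of_mem (fun i _ =>
        lt_of_le_of_lt (le_trans (hM1 (Set.mem_range_self i)) (le_max_left _ _))
          (lt_add_one _)),
      Finset.filter_true_of_mem (fun j _ =>
        lt_of_le_of_lt (le_trans (hM2 (Set.mem_range_self j)) (le_max_right _ _))
          (lt_add_one _))] at h
    exact h
  · -- s > 0 : integral representation
    set w : ℝ → ℝ := fun t => s * Real.exp (-(s * t)) with hw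
    have hrep : ∀ (n : ℕ) (lamv : Fin n → ℝ) (c : Fin n → ℝ), (∀ i, 0 ≤ c i) →
        (∑ i, c i * Real.exp (-(s * lamv i)))
          = ∫ t : ℝ, (∑ i ∈ Finset.univ.filter (fun i => lamv i < t), c i) * w t := by
      intro n lamv c _
      have h3 : ∀ t : ℝ,
          (∑ i, (Set.Ioi (lamv i)).indicator (fun u : ℝ => c i * (s * Real.exp (-(s * u)))) t)
            = (∑ i ∈ Finset.univ.filter (fun i => lamv i < t), c i) * w t := by
        intro t
        rw [Finset.sum_mul, Finset.sum_filter]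
        refine Finset.sum_congr rfl fun i _ => ?_
        by_cases hi : lamv i < t
        · rw [Set.indicator_of_mem (Set.mem_Ioi.mpr hi), if_pos hi]
        · rw [Set.indicator_of_notMem (fun hc => hi (Set.mem_Ioi.mp hc)), if_neg hi]
      calc (∑ i, c i * Real.exp (-(s * lamv i)))
          = ∑ i, ∫ t : ℝ,
              (Set.Ioi (lamv i)).indicator (fun u : ℝ => c i * (s * Real.exp (-(s * u)))) t :=
            Finset.sum_congr rfl fun i _ => (integral_ray hs0 _ _).symm
        _ = ∫ t : ℝ, ∑ i,
              (Set.Ioi (lamv i)).indicator (fun u : ℝ => c i * (s * Real.exp (-(s * u)))) t :=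
            (integral_finset_sum _ (fun i _ => integrable_ray hs0 _ _)).symm
        _ = ∫ t : ℝ, (∑ i ∈ Finset.univ.filter (fun i => lamv i < t), c i) * w t :=
            integral_congr_ae (Filter.Eventually.of_forall h3)
    have hintble : ∀ (n : ℕ) (lamv : Fin n → ℝ) (c : Fin n → ℝ),
        Integrable (fun t : ℝ =>
          (∑ i ∈ Finset.univ.filter (fun i => lamv i < t), c i) * w t) := by
      intro n lamv c
      have h3 : ∀ t : ℝ,
          (∑ i, (Set.Ioi (lamv i)).indicator (fun u : ℝ => c i * (s * Real.exp (-(s * u)))) t)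
            = (∑ i ∈ Finset.univ.filter (fun i => lamv i < t), c i) * w t := by
        intro t
        rw [Finset.sum_mul, Finset.sum_filter]
        refine Finset.sum_congr rfl fun i _ => ?_
        by_cases hi : lamv i < t
        · rw [Set.indicator_of_mem (Set.mem_Ioi.mpr hi), if_pos hi]
        · rw [Set.indicator_of_notMem (fun hc => hi (Set.mem_Ioi.mp hc)), if_neg hi]
      exact (integrable_finset_sum _ (fun i _ => integrable_ray hs0 _ _)).congr
        (Filter.Eventually.of_forall h3)
    rw [hrep r lam (fun i => Complex.normSq (a i)) (fun i => Complex.normSq_nonneg _),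
      hrep q nu (fun j => Complex.normSq (b j)) (fun j => Complex.normSq_nonneg _)]
    refine integral_mono (hintble q nu _) (hintble r lam _) ?_
    intro t
    exact mul_le_mul_of_nonneg_right (key t)
      (mul_nonneg hs0.le (Real.exp_pos _).le)
end

section
/- Let V, Q be finite-dimensional complex vector spaces, p : V → Q surjective, and H₀^V, H₁^V Hermitian inner products on V with quotient Hermitian inner products H₀^Q, H₁^Q on Q. For s ∈ [0,1], let H_s^V be the geodesic between H₀^V and H₁^V (defined by H_s^V(u,v) = H₀^V(M^s u, v) where M is the positive H₀^V-self-adjoint operator with H₁^V(u,v) = H₀^V(M u, v)), and define H_s^Q analogously on Q. Then the quotient metric satisfies [H_s^V] ≥ H_s^Q for all s ∈ [0,1]. -/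
namespace Stmt14Aux

open Complex Finset

variable {V : Type*} [AddCommGroup V] [Module ℂ V] {H : V → V → ℂ}

lemma zero_left (h : IsInnerForm H) (w : V) : H 0 w = 0 := by
  have := h.1 0 0 w
  simp only [add_zero] at this
  linear_combination -this

lemma re_nonneg (h : IsInnerForm H) (x : V) : 0 ≤ (H x x).re := by
  by_cases hx : x = 0
  · subst hx; rw [zero_left h]; simp
  · exact (h.2.2.2 x hx).le

lemma sum_left (h : IsInnerForm H) {n : ℕ} (c : Fin n → ℂ) (v : Fin n → V) (w : V) :
    H (∑ i, c i • v i) w = ∑ i, (starRingEnd ℂ) (c i) * H (v i) w := by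
  classical
  induction (Finset.univ : Finset (Fin n)) using Finset.induction with
  | empty => simpa using zero_left h w
  | insert _ _ hx => simp_all [Finset.sum_insert hx, h.1, h.2.1]

lemma sum_right (h : IsInnerForm H) {n : ℕ} (c : Fin n → ℂ) (v : Fin n → V) (w : V) :
    H w (∑ i, c i • v i) = ∑ i, c i * H w (v i) := by
  rw [h.2.2.1, sum_left h, map_sum]
  congr 1; ext i
  rw [map_mul, Complex.conj_conj, ← h.2.2.1]

lemma diag_re (h : IsInnerForm H) {n : ℕ} (c : Fin n → ℂ) (v : Fin n → V) (D : Fin n → ℝ)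
    (hG : ∀ i j, H (v i) (v j) = if i = j then (D i : ℂ) else 0) :
    (H (∑ i, c i • v i) (∑ i, c i • v i)).re = ∑ i, D i * Complex.normSq (c i) := by
  rw [sum_left h]
  have : ∀ i, (starRingEnd ℂ) (c i) * H (v i) (∑ j, c j • v j)
      = (D i * Complex.normSq (c i) : ℝ) := by
    intro i
    rw [sum_right h]
    rw [Finset.mul_sum, Finset.sum_eq_single i]
    · rw [hG i i, if_pos rfl]
      push_cast
      rw [Complex.normSq_eq_conj_mul_self]
      ring
    · intro j _ hj
      rw [hG i j, if_neg (by exact fun hh => hj hh.symm)]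
      ring
    · intro hi; exact absurd (Finset.mem_univ i) hi
  rw [Finset.sum_congr rfl fun i _ => this i]
  rw [← Complex.ofReal_sum]
  simp

lemma cs {n : ℕ} (a b : Fin n → ℂ) :
    ‖∑ j, (starRingEnd ℂ) (a j) * b j‖ ≤
      Real.sqrt (∑ j, Complex.normSq (a j)) * Real.sqrt (∑ j, Complex.normSq (b j)) := by
  calc ‖∑ j, (starRingEnd ℂ) (a j) * b j‖
      ≤ ∑ j, ‖(starRingEnd ℂ) (a j) * b j‖ := by
        simpa using norm_sum_le Finset.univ (fun j => (starRingEnd ℂ) (a j) * b j)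
    _ = ∑ j, ‖a j‖ * ‖b j‖ := by simp [map_mul]
    _ ≤ _ := by
        have := Real.sum_mul_le_sqrt_mul_sqrt Finset.univ
          (fun j => ‖a j‖) (fun j => ‖b j‖)
        simpa [Complex.sq_norm] using this

lemma normSq_exp (w : ℂ) : Complex.normSq (Complex.exp w) = Real.exp (2 * w.re) := by
  rw [← Complex.sq_norm, Complex.norm_exp, sq, ← Real.exp_add]; ring_nf

lemma boundary {r q : ℕ} {mu : Fin r → ℝ} (hmu : ∀ i, 0 < mu i)
    {nu : Fin q → ℝ} (hnu : ∀ i, 0 < nu i) (T : Fin q → Fin r → ℂ)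
    {t : ℝ}
    (ht : ∀ x : Fin r → ℂ, ∑ j, nu j ^ t * Complex.normSq (∑ i, T j i * x i)
      ≤ ∑ i, mu i ^ t * Complex.normSq (x i))
    (u : Fin r → ℂ) (y : Fin q → ℂ) (z : ℂ) (hz : z.re = t) :
    ‖∑ j, ∑ i, (starRingEnd ℂ) (y j) * T j i * u i *
        Complex.exp (z * (((Real.log (nu j) - Real.log (mu i)) / 2 : ℝ) : ℂ))‖
      ≤ Real.sqrt (∑ j, Complex.normSq (y j)) * Real.sqrt (∑ i, Complex.normSq (u i)) := by
  set A : Fin q → ℂ := fun j =>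
    y j * Complex.exp (((starRingEnd ℂ) z - (t : ℂ)) * ((Real.log (nu j) / 2 : ℝ) : ℂ)) with hA
  set x' : Fin r → ℂ := fun i =>
    u i * Complex.exp (-(z * ((Real.log (mu i) / 2 : ℝ) : ℂ))) with hx'
  set B : Fin q → ℂ := fun j =>
    Complex.exp ((t : ℂ) * ((Real.log (nu j) / 2 : ℝ) : ℂ)) * ∑ i, T j i * x' i with hB
  have key : (∑ j, ∑ i, (starRingEnd ℂ) (y j) * T j i * u i *
        Complex.exp (z * (((Real.log (nu j) - Real.log (mu i)) / 2 : ℝ) : ℂ)))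
      = ∑ j, (starRingEnd ℂ) (A j) * B j := by
    refine Finset.sum_congr rfl (fun j _ => ?_)
    have hconjA : (starRingEnd ℂ) (A j) = (starRingEnd ℂ) (y j) *
        Complex.exp ((z - (t : ℂ)) * ((Real.log (nu j) / 2 : ℝ) : ℂ)) := by
      rw [hA]
      simp only [map_mul, ← Complex.exp_conj, map_sub, Complex.conj_conj, Complex.conj_ofReal]
    rw [hconjA, hB]
    simp only []
    rw [Finset.mul_sum, Finset.mul_sum]
    refine Finset.sum_congr rfl (fun i _ => ?_)
    rw [hx']
    rw [show ((starRingEnd ℂ) (y j) * Complex.exp ((z - (t:ℂ)) * ((Real.log (nu j) / 2 : ℝ) : ℂ))) *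
      (Complex.exp ((t : ℂ) * ((Real.log (nu j) / 2 : ℝ) : ℂ)) *
        (T j i * (u i * Complex.exp (-(z * ((Real.log (mu i) / 2 : ℝ) : ℂ))))))
      = (starRingEnd ℂ) (y j) * T j i * u i *
        (Complex.exp ((z - (t:ℂ)) * ((Real.log (nu j) / 2 : ℝ) : ℂ)) *
          Complex.exp ((t : ℂ) * ((Real.log (nu j) / 2 : ℝ) : ℂ)) *
          Complex.exp (-(z * ((Real.log (mu i) / 2 : ℝ) : ℂ)))) from by ring]
    congr 1
    rw [← Complex.exp_add, ← Complex.exp_add]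
    congr 1
    push_cast
    ring
  rw [key]
  refine (cs A B).trans ?_
  have hAsum : (∑ j, Complex.normSq (A j)) = ∑ j, Complex.normSq (y j) := by
    refine Finset.sum_congr rfl (fun j _ => ?_)
    rw [hA, Complex.normSq_mul, normSq_exp]
    have : (((starRingEnd ℂ) z - (t : ℂ)) * ((Real.log (nu j) / 2 : ℝ) : ℂ)).re = 0 := by
      simp [Complex.mul_re, Complex.sub_re, Complex.conj_re, hz]
    rw [this]
    simp
  have hBsum : (∑ j, Complex.normSq (B j)) ≤ ∑ i, Complex.normSq (u i) := by
    have h1 : (∑ j, Complex.normSq (B j))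
        = ∑ j, nu j ^ t * Complex.normSq (∑ i, T j i * x' i) := by
      refine Finset.sum_congr rfl (fun j _ => ?_)
      rw [hB, Complex.normSq_mul, normSq_exp]
      congr 1
      rw [Real.rpow_def_of_pos (hnu j)]
      congr 1
      simp [Complex.mul_re]
      ring
    have h2 : (∑ i, mu i ^ t * Complex.normSq (x' i)) = ∑ i, Complex.normSq (u i) := by
      refine Finset.sum_congr rfl (fun i _ => ?_)
      rw [hx', Complex.normSq_mul, normSq_exp]
      have hre : (2 * (-(z * ((Real.log (mu i) / 2 : ℝ) : ℂ))).re) = -(t * Real.log (mu i)) := by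
        simp [Complex.mul_re, hz]
        ring
      rw [hre]
      rw [show Real.exp (-(t * Real.log (mu i))) = mu i ^ (-t) from by
        rw [Real.rpow_def_of_pos (hmu i)]; ring_nf]
      rw [show mu i ^ t * (Complex.normSq (u i) * mu i ^ (-t))
        = (mu i ^ t * mu i ^ (-t)) * Complex.normSq (u i) from by ring]
      rw [← Real.rpow_add (hmu i)]
      simp
    rw [h1, ← h2]
    exact ht x'
  rw [hAsum]
  exact mul_le_mul_of_nonneg_left (Real.sqrt_le_sqrt hBsum) (Real.sqrt_nonneg _)

lemma dual {r q : ℕ} {mu : Fin r → ℝ} (hmu : ∀ i, 0 < mu i)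
    {nu : Fin q → ℝ} (hnu : ∀ i, 0 < nu i) (T : Fin q → Fin r → ℂ)
    (h0 : ∀ x : Fin r → ℂ, ∑ j, Complex.normSq (∑ i, T j i * x i) ≤ ∑ i, Complex.normSq (x i))
    (h1 : ∀ x : Fin r → ℂ, ∑ j, nu j * Complex.normSq (∑ i, T j i * x i)
      ≤ ∑ i, mu i * Complex.normSq (x i))
    {s : ℝ} (hs0 : 0 ≤ s) (hs1 : s ≤ 1) (u : Fin r → ℂ) (y : Fin q → ℂ) :
    ‖∑ j, ∑ i, (starRingEnd ℂ) (y j) * T j i * u i *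
        Complex.exp ((s : ℂ) * (((Real.log (nu j) - Real.log (mu i)) / 2 : ℝ) : ℂ))‖
      ≤ Real.sqrt (∑ j, Complex.normSq (y j)) * Real.sqrt (∑ i, Complex.normSq (u i)) := by
  set M : ℝ := Real.sqrt (∑ j, Complex.normSq (y j)) * Real.sqrt (∑ i, Complex.normSq (u i))
    with hM
  have hMnn : 0 ≤ M := mul_nonneg (Real.sqrt_nonneg _) (Real.sqrt_nonneg _)
  set F : ℂ → ℂ := fun z => ∑ j, ∑ i, (starRingEnd ℂ) (y j) * T j i * u i *
      Complex.exp (z * (((Real.log (nu j) - Real.log (mu i)) / 2 : ℝ) : ℂ)) with hF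
  have hd : Differentiable ℂ F := by
    apply Differentiable.fun_sum; intro j _
    apply Differentiable.fun_sum; intro i _
    exact (((differentiable_id.mul_const _)).cexp).const_mul _
  have ht0 : ∀ x : Fin r → ℂ, ∑ j, nu j ^ (0:ℝ) * Complex.normSq (∑ i, T j i * x i)
      ≤ ∑ i, mu i ^ (0:ℝ) * Complex.normSq (x i) := by
    intro x; simpa using h0 x
  have ht1 : ∀ x : Fin r → ℂ, ∑ j, nu j ^ (1:ℝ) * Complex.normSq (∑ i, T j i * x i)
      ≤ ∑ i, mu i ^ (1:ℝ) * Complex.normSq (x i) := by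
    intro x; simpa using h1 x
  have ha : ∀ z ∈ Complex.re ⁻¹' {0}, ‖F z‖ ≤ M :=
    fun z hz => boundary hmu hnu T ht0 u y z (by simpa using hz)
  have hb : ∀ z ∈ Complex.re ⁻¹' {1}, ‖F z‖ ≤ M :=
    fun z hz => boundary hmu hnu T ht1 u y z (by simpa using hz)
  have hB : BddAbove ((norm ∘ F) '' (Complex.HadamardThreeLines.verticalClosedStrip 0 1)) := by
    refine ⟨∑ j, ∑ i, ‖(starRingEnd ℂ) (y j) * T j i * u i‖ *
      Real.exp |(Real.log (nu j) - Real.log (mu i)) / 2|, ?_⟩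
    rintro m ⟨z, hz, rfl⟩
    simp only [Function.comp_apply, hF]
    calc ‖(∑ j, ∑ i, (starRingEnd ℂ) (y j) * T j i * u i *
          Complex.exp (z * (((Real.log (nu j) - Real.log (mu i)) / 2 : ℝ) : ℂ)))‖
        ≤ ∑ j, ‖(∑ i, (starRingEnd ℂ) (y j) * T j i * u i *
          Complex.exp (z * (((Real.log (nu j) - Real.log (mu i)) / 2 : ℝ) : ℂ)))‖ :=
          norm_sum_le _ _
      _ ≤ ∑ j, ∑ i, ‖(starRingEnd ℂ) (y j) * T j i * u i *
          Complex.exp (z * (((Real.log (nu j) - Real.log (mu i)) / 2 : ℝ) : ℂ))‖ :=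
          Finset.sum_le_sum (fun j _ => norm_sum_le _ _)
      _ ≤ _ := by
          refine Finset.sum_le_sum (fun j _ => Finset.sum_le_sum (fun i _ => ?_))
          rw [show ‖(starRingEnd ℂ) (y j) * T j i * u i *
              Complex.exp (z * (((Real.log (nu j) - Real.log (mu i)) / 2 : ℝ) : ℂ))‖
            = ‖(starRingEnd ℂ) (y j) * T j i * u i‖ *
              ‖Complex.exp (z * (((Real.log (nu j) - Real.log (mu i)) / 2 : ℝ) : ℂ))‖
            from norm_mul _ _]
          refine mul_le_mul_of_nonneg_left ?_ (norm_nonneg _)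
          rw [Complex.norm_exp]
          apply Real.exp_le_exp.2
          have : (z * (((Real.log (nu j) - Real.log (mu i)) / 2 : ℝ) : ℂ)).re
              = z.re * ((Real.log (nu j) - Real.log (mu i)) / 2) := by
            simp [Complex.mul_re]
          rw [this]
          have hz' : z.re ∈ Set.Icc (0:ℝ) 1 := hz
          calc z.re * ((Real.log (nu j) - Real.log (mu i)) / 2)
              ≤ |z.re * ((Real.log (nu j) - Real.log (mu i)) / 2)| := le_abs_self _
            _ = |z.re| * |(Real.log (nu j) - Real.log (mu i)) / 2| := abs_mul _ _
            _ ≤ 1 * |(Real.log (nu j) - Real.log (mu i)) / 2| := by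
                refine mul_le_mul_of_nonneg_right ?_ (abs_nonneg _)
                rw [_root_.abs_of_nonneg hz'.1]; exact hz'.2
            _ = _ := one_mul _
  have hzmem : (s : ℂ) ∈ Complex.HadamardThreeLines.verticalClosedStrip 0 1 := by
    simp only [Complex.HadamardThreeLines.verticalClosedStrip, Set.mem_preimage,
      Complex.ofReal_re]
    exact ⟨hs0, hs1⟩
  have := Complex.HadamardThreeLines.norm_le_interp_of_mem_verticalClosedStrip₀₁' F hzmem
    hd.diffContOnCl hB ha hb
  rw [Complex.ofReal_re] at this
  refine le_trans this ?_
  by_cases hM0 : M = 0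
  · rw [hM0]
    rcases eq_or_lt_of_le hs0 with h | h
    · rw [← h]; simp
    · rw [Real.zero_rpow (ne_of_gt h)]; simp
  · have hMpos : 0 < M := lt_of_le_of_ne hMnn (Ne.symm hM0)
    rw [← Real.rpow_add hMpos]
    simp

lemma key {r q : ℕ} {mu : Fin r → ℝ} (hmu : ∀ i, 0 < mu i)
    {nu : Fin q → ℝ} (hnu : ∀ i, 0 < nu i) (T : Fin q → Fin r → ℂ)
    (h0 : ∀ x : Fin r → ℂ, ∑ j, Complex.normSq (∑ i, T j i * x i) ≤ ∑ i, Complex.normSq (x i))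
    (h1 : ∀ x : Fin r → ℂ, ∑ j, nu j * Complex.normSq (∑ i, T j i * x i)
      ≤ ∑ i, mu i * Complex.normSq (x i))
    {s : ℝ} (hs0 : 0 ≤ s) (hs1 : s ≤ 1) (x : Fin r → ℂ) :
    ∑ j, nu j ^ s * Complex.normSq (∑ i, T j i * x i)
      ≤ ∑ i, mu i ^ s * Complex.normSq (x i) := by
  set w : Fin q → ℂ := fun j => ∑ i, T j i * x i with hw
  set u : Fin r → ℂ := fun i => ((mu i ^ (s/2) : ℝ) : ℂ) * x i with hu
  set y : Fin q → ℂ := fun j => ((nu j ^ (s/2) : ℝ) : ℂ) * w j with hy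
  set S : ℝ := ∑ j, nu j ^ s * Complex.normSq (w j) with hS
  set R : ℝ := ∑ i, mu i ^ s * Complex.normSq (x i) with hR
  have hSnn : 0 ≤ S := Finset.sum_nonneg fun j _ =>
    mul_nonneg (Real.rpow_nonneg (hnu j).le _) (Complex.normSq_nonneg _)
  have hRnn : 0 ≤ R := Finset.sum_nonneg fun i _ =>
    mul_nonneg (Real.rpow_nonneg (hmu i).le _) (Complex.normSq_nonneg _)
  have e1 : ∀ j, (nu j ^ (s/2) : ℝ) * nu j ^ (s/2) = nu j ^ s := by
    intro j; rw [← Real.rpow_add (hnu j)]; ring_nf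
  have e1m : ∀ i, (mu i ^ (s/2) : ℝ) * mu i ^ (s/2) = mu i ^ s := by
    intro i; rw [← Real.rpow_add (hmu i)]; ring_nf
  have e2 : ∀ i, (mu i ^ (s/2) : ℝ) * mu i ^ (-(s/2)) = 1 := by
    intro i; rw [← Real.rpow_add (hmu i)]; simp
  have hterm : ∀ j i, (starRingEnd ℂ) (y j) * T j i * u i *
      Complex.exp ((s : ℂ) * (((Real.log (nu j) - Real.log (mu i)) / 2 : ℝ) : ℂ))
      = ((nu j ^ s : ℝ) : ℂ) * (starRingEnd ℂ) (w j) * (T j i * x i) := by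
    intro j i
    have hexp : Complex.exp ((s : ℂ) * (((Real.log (nu j) - Real.log (mu i)) / 2 : ℝ) : ℂ))
        = (((nu j ^ (s/2)) * (mu i ^ (-(s/2))) : ℝ) : ℂ) := by
      rw [show (s : ℂ) * (((Real.log (nu j) - Real.log (mu i)) / 2 : ℝ) : ℂ)
        = ((s * ((Real.log (nu j) - Real.log (mu i)) / 2) : ℝ) : ℂ) from by push_cast; ring,
        ← Complex.ofReal_exp]
      congr 1
      rw [Real.rpow_def_of_pos (hnu j), Real.rpow_def_of_pos (hmu i), ← Real.exp_add]
      congr 1; ring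
    have E1 : ((nu j ^ (s/2) : ℝ) : ℂ) * ((nu j ^ (s/2) : ℝ) : ℂ) = ((nu j ^ s : ℝ) : ℂ) := by
      rw [← Complex.ofReal_mul, e1 j]
    have E2 : ((mu i ^ (s/2) : ℝ) : ℂ) * ((mu i ^ (-(s/2)) : ℝ) : ℂ) = 1 := by
      rw [← Complex.ofReal_mul, e2 i]; simp
    rw [hexp, hy, hu]
    calc (starRingEnd ℂ) (((nu j ^ (s/2) : ℝ) : ℂ) * w j) * T j i *
          (((mu i ^ (s/2) : ℝ) : ℂ) * x i) * (((nu j ^ (s/2)) * (mu i ^ (-(s/2))) : ℝ) : ℂ)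
        = ((((nu j ^ (s/2) : ℝ) : ℂ) * ((nu j ^ (s/2) : ℝ) : ℂ)) * (starRingEnd ℂ) (w j)
            * (T j i * x i)) * (((mu i ^ (s/2) : ℝ) : ℂ) * ((mu i ^ (-(s/2)) : ℝ) : ℂ)) := by
          rw [map_mul, Complex.conj_ofReal]
          push_cast
          ring
      _ = ((nu j ^ s : ℝ) : ℂ) * (starRingEnd ℂ) (w j) * (T j i * x i) := by
          rw [E1, E2, mul_one]
  have hFs : (∑ j, ∑ i, (starRingEnd ℂ) (y j) * T j i * u i *
      Complex.exp ((s : ℂ) * (((Real.log (nu j) - Real.log (mu i)) / 2 : ℝ) : ℂ)))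
      = ((S : ℝ) : ℂ) := by
    have hcast : ((S : ℝ) : ℂ) = ∑ j, ((nu j ^ s : ℝ) : ℂ) *
        ((Complex.normSq (w j) : ℝ) : ℂ) := by
      rw [hS]; push_cast; ring
    rw [hcast]
    refine Finset.sum_congr rfl (fun j _ => ?_)
    rw [Finset.sum_congr rfl (fun i _ => hterm j i), ← Finset.mul_sum]
    have hwj : ∑ i, T j i * x i = w j := rfl
    rw [hwj, ← Complex.mul_conj]
    ring
  have hnormy : (∑ j, Complex.normSq (y j)) = S := by
    refine Finset.sum_congr rfl (fun j _ => ?_)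
    rw [hy, Complex.normSq_mul, Complex.normSq_ofReal, e1 j]
  have hnormu : (∑ i, Complex.normSq (u i)) = R := by
    refine Finset.sum_congr rfl (fun i _ => ?_)
    rw [hu, Complex.normSq_mul, Complex.normSq_ofReal, e1m i]
  have hdd := dual hmu hnu T h0 h1 hs0 hs1 u y
  rw [hFs, hnormy, hnormu] at hdd
  rw [Complex.norm_real, Real.norm_eq_abs, _root_.abs_of_nonneg hSnn] at hdd
  show S ≤ R
  rcases eq_or_lt_of_le hSnn with h | hSpos
  · linarith
  · have hsq : Real.sqrt S ≤ Real.sqrt R := by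
      have hss : Real.sqrt S * Real.sqrt S ≤ Real.sqrt S * Real.sqrt R := by
        rw [Real.mul_self_sqrt hSnn]; exact hdd
      exact le_of_mul_le_mul_left hss (Real.sqrt_pos.2 hSpos)
    calc S = Real.sqrt S * Real.sqrt S := (Real.mul_self_sqrt hSnn).symm
      _ ≤ Real.sqrt R * Real.sqrt R :=
        mul_le_mul hsq hsq (Real.sqrt_nonneg _) (Real.sqrt_nonneg _)
      _ = R := Real.mul_self_sqrt hRnn

end Stmt14Aux


/-- Let `p : V → Q` be surjective, `H₀, H₁` Hermitian inner products on `V` with quotient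
inner products `H₀Q, H₁Q` on `Q`. The geodesic `Hs s (u,v) = H₀ (Mˢ u, v)` (where `M` is
the positive `H₀`-self-adjoint operator with `H₁ = H₀(M·,·)`) is encoded by an
`H₀`-orthonormal basis `e` diagonalizing `M` with positive eigenvalues `mu`, via the Gram
conditions `Hs s (e i) (e j) = (mu i)^s δᵢⱼ`; similarly on `Q` with basis `ε` and
eigenvalues `nu`. Then for all `s ∈ [0,1]` the quotient of `Hs s` dominates the geodesic
`HsQ s` between the quotient metrics: `HsQ s (f,f) ≤ inf {Hs s (g,g) : p g = f}`. -/
theorem stmt_14 {V Q : Type*} [AddCommGroup V] [Module ℂ V] [FiniteDimensional ℂ V]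
    [AddCommGroup Q] [Module ℂ Q] [FiniteDimensional ℂ Q]
    (p : V →ₗ[ℂ] Q) (hp : Function.Surjective p)
    {r q : ℕ} (mu : Fin r → ℝ) (hmu : ∀ i, 0 < mu i) (nu : Fin q → ℝ) (hnu : ∀ i, 0 < nu i)
    (e : Fin r → V) (ε : Fin q → Q)
    (H₀ H₁ : V → V → ℂ) (hH₀ : IsInnerForm H₀) (hH₁ : IsInnerForm H₁)
    (he₀ : ∀ i j, H₀ (e i) (e j) = if i = j then 1 else 0)
    (he₁ : ∀ i j, H₁ (e i) (e j) = if i = j then (mu i : ℝ) else 0)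
    (hsp : Submodule.span ℂ (Set.range e) = ⊤)
    (H₀Q H₁Q : Q → Q → ℂ) (hH₀Q : IsInnerForm H₀Q) (hH₁Q : IsInnerForm H₁Q)
    (hquot₀ : ∀ f : Q, (H₀Q f f).re = sInf {c : ℝ | ∃ g : V, p g = f ∧ c = (H₀ g g).re})
    (hquot₁ : ∀ f : Q, (H₁Q f f).re = sInf {c : ℝ | ∃ g : V, p g = f ∧ c = (H₁ g g).re})
    (hε₀ : ∀ i j, H₀Q (ε i) (ε j) = if i = j then 1 else 0)
    (hε₁ : ∀ i j, H₁Q (ε i) (ε j) = if i = j then (nu i : ℝ) else 0)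
    (hspQ : Submodule.span ℂ (Set.range ε) = ⊤)
    (Hs : ℝ → V → V → ℂ) (HsQ : ℝ → Q → Q → ℂ)
    (hHs : ∀ s : ℝ, 0 ≤ s → s ≤ 1 → IsInnerForm (Hs s))
    (hHsQ : ∀ s : ℝ, 0 ≤ s → s ≤ 1 → IsInnerForm (HsQ s))
    (hGram : ∀ (s : ℝ) (i j), Hs s (e i) (e j) =
      if i = j then (Real.rpow (mu i) s : ℝ) else 0)
    (hGramQ : ∀ (s : ℝ) (i j), HsQ s (ε i) (ε j) =
      if i = j then (Real.rpow (nu i) s : ℝ) else 0) :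
    ∀ s : ℝ, 0 ≤ s → s ≤ 1 → ∀ f : Q,
      (HsQ s f f).re ≤ sInf {c : ℝ | ∃ g : V, p g = f ∧ c = (Hs s g g).re} := by
  classical
  -- bases
  have hli : LinearIndependent ℂ e := by
    rw [Fintype.linearIndependent_iff]
    intro g hg j
    have h : H₀ (∑ i, g i • e i) (e j) = H₀ 0 (e j) := by rw [hg]
    rw [Stmt14Aux.sum_left hH₀, Stmt14Aux.zero_left hH₀] at h
    simp only [he₀, mul_ite, mul_one, mul_zero, Finset.sum_ite_eq', Finset.mem_univ,
      if_true] at h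
    simpa using h
  have hliQ : LinearIndependent ℂ ε := by
    rw [Fintype.linearIndependent_iff]
    intro g hg j
    have h : H₀Q (∑ i, g i • ε i) (ε j) = H₀Q 0 (ε j) := by rw [hg]
    rw [Stmt14Aux.sum_left hH₀Q, Stmt14Aux.zero_left hH₀Q] at h
    simp only [hε₀, mul_ite, mul_one, mul_zero, Finset.sum_ite_eq', Finset.mem_univ,
      if_true] at h
    simpa using h
  let b : Module.Basis (Fin r) ℂ V := Module.Basis.mk hli hsp.ge
  let bQ : Module.Basis (Fin q) ℂ Q := Module.Basis.mk hliQ hspQ.ge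
  set T : Fin q → Fin r → ℂ := fun j i => bQ.repr (p (e i)) j with hT
  have hpe : ∀ i, p (e i) = ∑ j, T j i • ε j := by
    intro i
    conv_lhs => rw [← bQ.sum_repr (p (e i))]
    exact Finset.sum_congr rfl fun j _ => by rw [show bQ j = ε j from Module.Basis.mk_apply _ _ _]
  have hps : ∀ x : Fin r → ℂ, p (∑ i, x i • e i) = ∑ j, (∑ i, T j i * x i) • ε j := by
    intro x
    calc p (∑ i, x i • e i) = ∑ i, x i • (∑ j, T j i • ε j) := by
          rw [map_sum]
          exact Finset.sum_congr rfl fun i _ => by rw [map_smul, hpe i]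
      _ = ∑ i, ∑ j, (T j i * x i) • ε j := by
          refine Finset.sum_congr rfl fun i _ => ?_
          rw [Finset.smul_sum]
          exact Finset.sum_congr rfl fun j _ => by rw [smul_smul, mul_comm]
      _ = ∑ j, ∑ i, (T j i * x i) • ε j := Finset.sum_comm
      _ = ∑ j, (∑ i, T j i * x i) • ε j := by
          exact Finset.sum_congr rfl fun j _ => (Finset.sum_smul).symm
  -- endpoint inequalities in coordinates
  have quot_le : ∀ (HV : V → V → ℂ), IsInnerForm HV → ∀ g : V,
      sInf {c : ℝ | ∃ g' : V, p g' = p g ∧ c = (HV g' g').re} ≤ (HV g g).re := by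
    intro HV hHV g
    refine csInf_le ⟨0, ?_⟩ ⟨g, rfl, rfl⟩
    rintro c ⟨g', _, rfl⟩
    exact Stmt14Aux.re_nonneg hHV g'
  have h0' : ∀ x : Fin r → ℂ, ∑ j, Complex.normSq (∑ i, T j i * x i)
      ≤ ∑ i, Complex.normSq (x i) := by
    intro x
    have hL : (H₀Q (p (∑ i, x i • e i)) (p (∑ i, x i • e i))).re
        = ∑ j, Complex.normSq (∑ i, T j i * x i) := by
      rw [hps x, Stmt14Aux.diag_re hH₀Q _ ε (fun _ => (1:ℝ))
        (by intro i j; rw [hε₀]; simp)]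
      simp
    have hRg : (H₀ (∑ i, x i • e i) (∑ i, x i • e i)).re = ∑ i, Complex.normSq (x i) := by
      rw [Stmt14Aux.diag_re hH₀ x e (fun _ => (1:ℝ)) (by intro i j; rw [he₀]; simp)]
      simp
    have h := hquot₀ (p (∑ i, x i • e i))
    have hle := quot_le H₀ hH₀ (∑ i, x i • e i)
    rw [← h] at hle
    rw [← hL, ← hRg]
    exact hle
  have h1' : ∀ x : Fin r → ℂ, ∑ j, nu j * Complex.normSq (∑ i, T j i * x i)
      ≤ ∑ i, mu i * Complex.normSq (x i) := by
    intro x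
    have hL : (H₁Q (p (∑ i, x i • e i)) (p (∑ i, x i • e i))).re
        = ∑ j, nu j * Complex.normSq (∑ i, T j i * x i) := by
      rw [hps x, Stmt14Aux.diag_re hH₁Q _ ε nu (by intro i j; rw [hε₁, apply_ite (fun (t:ℝ) => (t:ℂ))]; norm_num)]
    have hRg : (H₁ (∑ i, x i • e i) (∑ i, x i • e i)).re
        = ∑ i, mu i * Complex.normSq (x i) := by
      rw [Stmt14Aux.diag_re hH₁ x e mu (by intro i j; rw [he₁, apply_ite (fun (t:ℝ) => (t:ℂ))]; norm_num)]
    have h := hquot₁ (p (∑ i, x i • e i))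
    have hle := quot_le H₁ hH₁ (∑ i, x i • e i)
    rw [← h] at hle
    rw [← hL, ← hRg]
    exact hle
  -- main argument
  intro s hs0 hs1 f
  refine le_csInf ?_ ?_
  · obtain ⟨g0, hg0⟩ := hp f
    exact ⟨_, g0, hg0, rfl⟩
  · rintro c ⟨g, hg, rfl⟩
    set x : Fin r → ℂ := fun i => b.repr g i with hx
    have hgx : g = ∑ i, x i • e i := by
      conv_lhs => rw [← b.sum_repr g]
      exact Finset.sum_congr rfl fun i _ => by rw [show b i = e i from Module.Basis.mk_apply _ _ _]
    have hLHS : (HsQ s f f).re = ∑ j, nu j ^ s * Complex.normSq (∑ i, T j i * x i) := by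
      rw [← hg, hgx, hps x, Stmt14Aux.diag_re (hHsQ s hs0 hs1) _ ε (fun j => nu j ^ s)
        (by intro i j; rw [hGramQ s i j, apply_ite (fun (t:ℝ) => (t:ℂ))]; norm_num)]
    have hRHS : (Hs s g g).re = ∑ i, mu i ^ s * Complex.normSq (x i) := by
      conv_lhs => rw [hgx]
      rw [Stmt14Aux.diag_re (hHs s hs0 hs1) x e (fun i => mu i ^ s)
        (by intro i j; rw [hGram s i j, apply_ite (fun (t:ℝ) => (t:ℂ))]; norm_num)]
    rw [hLHS, hRHS]
    exact Stmt14Aux.key hmu hnu T h0' h1' hs0 hs1 x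
end
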